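/- Let k be a nonnegative integer. Then the join K_{k+2} ∨ (4K_1) is not k-factor-critical; that is, there exists a set Q of exactly k vertices such that deleting Q leaves a graph with no perfect matching. -/

import Mathlib

open SimpleGraph

/-- The join `G1 ∨ G2`: all edges of `G1` and `G2` together with all edges between them. -/
def graphJoin {A B : Type*} (G1 : SimpleGraph A) (G2 : SimpleGraph B) : SimpleGraph (A ⊕ B) :=
  SimpleGraph.fromRel fun x y =>
    match x, y with
    | Sum.inl a, Sum.inl a' => G1.Adj a a'
    | Sum.inl _, Sum.inr _ => True
    | Sum.inr b, Sum.inr b' => G2.Adj b b'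
    | Sum.inr _, Sum.inl _ => False

theorem join_complete_k_add_two_four_not_kFactorCritical (k : ℕ) :
    ∃ Q : Finset (Fin (k + 2) ⊕ Fin 4), Q.card = k ∧
      ∀ M : ((graphJoin (⊤ : SimpleGraph (Fin (k + 2)))
          (⊥ : SimpleGraph (Fin 4))).induce ((↑Q : Set _)ᶜ)).Subgraph,
        ¬ M.IsPerfectMatching := by
  classical
  set Q : Finset (Fin (k+2) ⊕ Fin 4) :=
    (Finset.univ : Finset (Fin k)).image (fun i => Sum.inl (Fin.castLE (by omega) i)) with hQ
  refine ⟨Q, ?_, ?_⟩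
  · rw [hQ, Finset.card_image_of_injective _
      (fun a b h => Fin.castLE_injective _ (Sum.inl_injective h)), Finset.card_univ, Fintype.card_fin]
  · have hinr : ∀ b : Fin 4, (Sum.inr b : Fin (k+2) ⊕ Fin 4) ∈ (↑Q : Set _)ᶜ := by
      intro b; simp [hQ]
    intro M hM
    have key : ∀ b : Fin 4, ∃ i : Fin (k+2), k ≤ i.val ∧
        ∃ hi : (Sum.inl i : Fin (k+2) ⊕ Fin 4) ∈ (↑Q : Set _)ᶜ,
          M.Adj ⟨Sum.inr b, hinr b⟩ ⟨Sum.inl i, hi⟩ := by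
      intro b
      obtain ⟨w, hw, -⟩ := hM.1 (hM.2 ⟨Sum.inr b, hinr b⟩)
      obtain ⟨x, hx⟩ := w
      have hadj := M.adj_sub hw
      match x with
      | Sum.inl i =>
          refine ⟨i, ?_, hx, hw⟩
          have : (Sum.inl i : Fin (k+2) ⊕ Fin 4) ∉ Q := hx
          simp [hQ, Fin.ext_iff] at this
          by_contra h
          exact this ⟨i.val, by omega⟩ rfl
      | Sum.inr b' =>
          exfalso
          simp [graphJoin] at hadj
    choose f hf hfQ hfM using key
    have hinj : Function.Injective f := by
      intro b b' h
      have hv : (⟨Sum.inl (f b), hfQ b⟩ : ((↑Q : Set (Fin (k+2) ⊕ Fin 4))ᶜ : Set _)) =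
          ⟨Sum.inl (f b'), hfQ b'⟩ :=
        Subtype.ext (congrArg Sum.inl h)
      have h1 : M.Adj ⟨Sum.inr b, hinr b⟩ ⟨Sum.inl (f b'), hfQ b'⟩ := hv ▸ hfM b
      have h2 := hfM b'
      obtain ⟨w, -, hu⟩ := hM.1 (M.edge_vert (M.adj_symm (hfM b')))
      have e1 := hu _ h1.symm
      have e2 := hu _ h2.symm
      have : (⟨Sum.inr b, hinr b⟩ : ((↑Q : Set (Fin (k+2) ⊕ Fin 4))ᶜ : Set _)) =
          ⟨Sum.inr b', hinr b'⟩ := e1.trans e2.symm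
      simpa using congrArg Subtype.val this
    have hg : Function.Injective (fun b : Fin 4 => (⟨(f b).val - k, by
        have := hf b; have := (f b).isLt; omega⟩ : Fin 2)) := by
      intro b b' h
      apply hinj
      have h1 := hf b; have h2 := hf b'
      have := congrArg Fin.val h
      simp at this
      exact Fin.ext (by omega)
    have := Fintype.card_le_of_injective _ hg
    simp at this
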